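/- Let K be a field, d a positive integer, and G a finite subgroup of the general linear group GL_d(K) such that the order of G is not divisible by the characteristic of K and is coprime to d!. Then G is commutative. -/

import Mathlib

set_option maxHeartbeats 1600000

open Module Polynomial
open scoped commutatorElement

section Helpers

variable {L : Type*} [Field L] [IsAlgClosed L]
variable {V : Type*} [AddCommGroup V] [Module L V] [FiniteDimensional L V]

/-- A unit of finite order coprime to the characteristic is (finitely) semisimple. -/
theorem isFS_of_unit_pow {g : (Module.End L V)ˣ} {n : ℕ}
    (h1 : g ^ n = 1) (h0 : (n : L) ≠ 0) :
    (g : Module.End L V).IsFinitelySemisimple := by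
  have hsf : Squarefree (X ^ n - 1 : L[X]) :=
    (Polynomial.X_pow_sub_one_separable_iff.mpr h0).squarefree
  have hz : Polynomial.aeval (g : Module.End L V) (X ^ n - 1 : L[X]) = 0 := by
    have hpow : ((g : Module.End L V)) ^ n = 1 := by
      have := congrArg (Units.val) h1
      simpa using this
    simp [hpow]
  exact (Module.End.isSemisimple_of_squarefree_aeval_eq_zero hsf hz).isFinitelySemisimple

theorem mem_maxGen_conj (g : (Module.End L V)ˣ) (b : Module.End L V) (μ : L) (x : V) :
    x ∈ Module.End.maxGenEigenspace
        ((g : Module.End L V) * b * (↑g⁻¹ : Module.End L V)) μ ↔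
      (↑g⁻¹ : Module.End L V) x ∈ Module.End.maxGenEigenspace b μ := by
  simp only [Module.End.mem_maxGenEigenspace]
  have key : ∀ k : ℕ, ((↑g * b * ↑g⁻¹ : Module.End L V) - μ • 1) ^ k =
      ↑g * ((b - μ • 1) ^ k) * ↑g⁻¹ := by
    intro k
    have h1 : (↑g * b * ↑g⁻¹ : Module.End L V) - μ • 1 = ↑g * (b - μ • 1) * ↑g⁻¹ := by
      have : (↑g * (μ • 1) * ↑g⁻¹ : Module.End L V) = μ • 1 := by
        rw [mul_smul_comm, smul_mul_assoc, mul_one, Units.mul_inv]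
      rw [mul_sub, sub_mul, this]
    rw [h1, Units.conj_pow]
  constructor
  · rintro ⟨k, hk⟩
    refine ⟨k, ?_⟩
    have e1 : ((↑g⁻¹ : Module.End L V) * ((↑g * b * ↑g⁻¹ - μ • 1) ^ k)) x
        = (((b - μ • 1) ^ k) * (↑g⁻¹ : Module.End L V)) x := by
      rw [key k, ← mul_assoc, ← mul_assoc, Units.inv_mul, one_mul]
    rw [Module.End.mul_apply, hk, map_zero, Module.End.mul_apply] at e1
    exact e1.symm
  · rintro ⟨k, hk⟩
    refine ⟨k, ?_⟩
    rw [key k, mul_assoc, Module.End.mul_apply, Module.End.mul_apply, hk, map_zero]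

/-- closure of a pairwise-commuting set is commutative -/
theorem closure_comm {M : Type*} [Group M] (s : Set M)
    (h : ∀ x ∈ s, ∀ y ∈ s, x * y = y * x) :
    ∀ a ∈ Subgroup.closure s, ∀ b ∈ Subgroup.closure s, a * b = b * a := by
  intro a ha b hb
  refine Subgroup.closure_induction₂
    (p := fun x y _ _ => Commute x y)
    (fun x y hx hy => h x hx y hy)
    (fun x _ => Commute.one_left x)
    (fun x _ => Commute.one_right x)
    (fun x y z _ _ _ hxz hyz => hxz.mul_left hyz)
    (fun y z x _ _ _ hxy hxz => hxy.mul_right hxz)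
    (fun x y _ _ hxy => hxy.inv_left)
    (fun x y _ _ hxy => hxy.inv_right)
    ha hb

theorem conj_mem_closure {M : Type*} [Group M] (s : Set M) (u : M)
    (h : ∀ x ∈ s, u * x * u⁻¹ ∈ Subgroup.closure s) :
    ∀ a ∈ Subgroup.closure s, u * a * u⁻¹ ∈ Subgroup.closure s := by
  intro a ha
  refine Subgroup.closure_induction
    (p := fun x _ => u * x * u⁻¹ ∈ Subgroup.closure s)
    (fun x hx => h x hx)
    (by simpa using Subgroup.one_mem _)
    (fun x y _ _ hx hy => by
      show u * (x * y) * u⁻¹ ∈ Subgroup.closure s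
      have h' : u * (x * y) * u⁻¹ = (u * x * u⁻¹) * (u * y * u⁻¹) := by group
      rw [h']; exact Subgroup.mul_mem _ hx hy)
    (fun x _ hx => by
      show u * x⁻¹ * u⁻¹ ∈ Subgroup.closure s
      have h' : u * x⁻¹ * u⁻¹ = (u * x * u⁻¹)⁻¹ := by group
      rw [h']; exact Subgroup.inv_mem _ hx)
    ha

end Helpers

section Key

variable {L : Type*} [Field L] [IsAlgClosed L]
variable {V : Type*} [AddCommGroup V] [Module L V] [FiniteDimensional L V]

/-- joint (generalized) eigenspace of a subgroup of units for a character `χ`. -/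
def JW (A : Subgroup (Module.End L V)ˣ) (χ : ↥A → L) : Submodule L V :=
  ⨅ a : ↥A, Module.End.maxGenEigenspace ((a : (Module.End L V)ˣ) : Module.End L V) (χ a)

theorem mem_JW {A : Subgroup (Module.End L V)ˣ} {χ : ↥A → L} {x : V} :
    x ∈ JW A χ ↔ ∀ a : ↥A,
      x ∈ Module.End.maxGenEigenspace ((a : (Module.End L V)ˣ) : Module.End L V) (χ a) :=
  Submodule.mem_iInf _

/-- conjugated character -/
def chiConj (A : Subgroup (Module.End L V)ˣ) (u : (Module.End L V)ˣ)
    (hm : ∀ a ∈ A, u⁻¹ * a * u ∈ A) (χ : ↥A → L) : ↥A → L :=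
  fun c => χ ⟨u⁻¹ * ↑c * u, hm _ c.2⟩

theorem chiConj_congr {A : Subgroup (Module.End L V)ˣ} {u v : (Module.End L V)ˣ}
    (huv : u = v) (hm : ∀ a ∈ A, u⁻¹ * a * u ∈ A) (hm' : ∀ a ∈ A, v⁻¹ * a * v ∈ A)
    (χ : ↥A → L) : chiConj A u hm χ = chiConj A v hm' χ := by
  subst huv; rfl

theorem chiConj_one {A : Subgroup (Module.End L V)ˣ}
    (hm : ∀ a ∈ A, (1:(Module.End L V)ˣ)⁻¹ * a * 1 ∈ A) (χ : ↥A → L) :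
    chiConj A 1 hm χ = χ := by
  funext c
  show χ ⟨1⁻¹ * ↑c * 1, _⟩ = χ c
  refine congrArg χ (Subtype.ext ?_)
  show (1:(Module.End L V)ˣ)⁻¹ * ↑c * 1 = ↑c
  rw [inv_one, one_mul, mul_one]

theorem chiConj_comp {A : Subgroup (Module.End L V)ˣ} {u v : (Module.End L V)ˣ}
    (hmu : ∀ a ∈ A, u⁻¹ * a * u ∈ A) (hmv : ∀ a ∈ A, v⁻¹ * a * v ∈ A)
    (hmvu : ∀ a ∈ A, (u * v)⁻¹ * a * (u * v) ∈ A) (χ : ↥A → L) :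
    chiConj A u hmu (chiConj A v hmv χ) = chiConj A (u * v) hmvu χ := by
  funext c
  show χ ⟨v⁻¹ * (u⁻¹ * ↑c * u) * v, _⟩ = χ ⟨(u * v)⁻¹ * ↑c * (u * v), _⟩
  refine congrArg χ (Subtype.ext ?_)
  show v⁻¹ * (u⁻¹ * ↑c * u) * v = (u * v)⁻¹ * ↑c * (u * v)
  rw [mul_inv_rev]
  simp only [mul_assoc]

/-- a unit normalizing `A` maps a joint eigenspace to the one with conjugated character -/
theorem JW_map {A : Subgroup (Module.End L V)ˣ} {u : (Module.End L V)ˣ}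
    (hm : ∀ a ∈ A, u⁻¹ * a * u ∈ A) {χ : ↥A → L} {x : V} (hx : x ∈ JW A χ) :
    (↑u : Module.End L V) x ∈ JW A (chiConj A u hm χ) := by
  rw [mem_JW] at hx ⊢
  intro a
  have h1 := hx ⟨u⁻¹ * ↑a * u, hm _ a.2⟩
  have hb' : ((↑(⟨u⁻¹ * ↑a * u, hm _ a.2⟩ : ↥A) : (Module.End L V)ˣ) : Module.End L V)
      = (↑u⁻¹ : Module.End L V) * ((a : (Module.End L V)ˣ) : Module.End L V)
          * (↑u : Module.End L V) := by
    show ((u⁻¹ * ↑a * u : (Module.End L V)ˣ) : Module.End L V) = _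
    rw [Units.val_mul, Units.val_mul]
  rw [hb'] at h1
  -- use mem_maxGen_conj with g := u : x ∈ maxGen (u * (u⁻¹ a u) * u⁻¹) ↔ u⁻¹ x ∈ ...
  have key := mem_maxGen_conj u
    ((↑u⁻¹ : Module.End L V) * ((a : (Module.End L V)ˣ) : Module.End L V)
      * (↑u : Module.End L V))
    (chiConj A u hm χ a) ((↑u : Module.End L V) x)
  have hsimp : (↑u : Module.End L V) * ((↑u⁻¹ : Module.End L V)
      * ((a : (Module.End L V)ˣ) : Module.End L V) * (↑u : Module.End L V))
      * (↑u⁻¹ : Module.End L V) = ((a : (Module.End L V)ˣ) : Module.End L V) := by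
    have h0 : (u * (u⁻¹ * ↑a * u) * u⁻¹ : (Module.End L V)ˣ) = ↑a := by
      rw [mul_assoc u⁻¹ (↑a) u, mul_inv_cancel_left, mul_inv_cancel_right]
    have h1 := congrArg Units.val h0
    rw [Units.val_mul, Units.val_mul, Units.val_mul, Units.val_mul] at h1
    exact h1
  rw [hsimp] at key
  have hux : (↑u⁻¹ : Module.End L V) ((↑u : Module.End L V) x) = x := by
    rw [← Module.End.mul_apply, Units.inv_mul, Module.End.one_apply]
  rw [hux] at key
  exact key.mpr h1

end Key

section Key2

variable {L : Type*} [Field L] [IsAlgClosed L]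
variable {V : Type*} [AddCommGroup V] [Module L V] [FiniteDimensional L V]

theorem unit_pow_card {G : Subgroup (Module.End L V)ˣ} [Finite ↥G]
    {g : (Module.End L V)ˣ} (hg : g ∈ G) : g ^ (Nat.card ↥G) = 1 := by
  have h1 : orderOf (⟨g, hg⟩ : ↥G) ∣ Nat.card ↥G := orderOf_dvd_natCard _
  have h2 : orderOf g ∣ Nat.card ↥G := by
    rwa [← Subgroup.orderOf_coe (⟨g, hg⟩ : ↥G)] at h1
  exact orderOf_dvd_iff_pow_eq_one.mp h2

theorem mem_isFS {G : Subgroup (Module.End L V)ˣ} [Finite ↥G]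
    (hchar : ¬ ringChar L ∣ Nat.card ↥G)
    {g : (Module.End L V)ˣ} (hg : g ∈ G) :
    (g : Module.End L V).IsFinitelySemisimple := by
  refine isFS_of_unit_pow (unit_pow_card hg) ?_
  intro h0
  exact hchar ((CharP.cast_eq_zero_iff L (ringChar L) _).mp h0)

theorem key_comm (G : Subgroup (Module.End L V)ˣ) [Finite ↥G] {D : ℕ}
    (hchar : ¬ ringChar L ∣ Nat.card ↥G)
    (hcop : (Nat.card ↥G).Coprime (Nat.factorial D))
    (hrank : Module.finrank L V ≤ D)
    (A : Subgroup (Module.End L V)ˣ) (hAG : A ≤ G)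
    (hab : ∀ a ∈ A, ∀ b ∈ A, a * b = b * a)
    {u : (Module.End L V)ˣ} (hu : u ∈ G)
    (hn1 : ∀ a ∈ A, u * a * u⁻¹ ∈ A) (hn2 : ∀ a ∈ A, u⁻¹ * a * u ∈ A) :
    ∀ a ∈ A, u * a = a * u := by
  classical
  have hcomm : ∀ i j : ↥A,
      Commute (((i : (Module.End L V)ˣ) : Module.End L V))
        (((j : (Module.End L V)ˣ) : Module.End L V)) := by
    intro i j
    have h := hab ↑i i.2 ↑j j.2
    have h2 := congrArg Units.val h
    rw [Units.val_mul, Units.val_mul] at h2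
    exact h2
  have hdec : ⨆ χ : ↥A → L, JW A χ = ⊤ :=
    Module.End.iSup_iInf_maxGenEigenspace_eq_top_of_iSup_maxGenEigenspace_eq_top_of_commute
      (fun a : ↥A => ((a : (Module.End L V)ˣ) : Module.End L V)) (fun i j _ => hcomm i j)
      (fun i => Module.End.iSup_maxGenEigenspace_eq_top _)
  have hind : iSupIndep (fun χ : ↥A → L => JW A χ) :=
    Module.End.independent_iInf_maxGenEigenspace_of_forall_mapsTo
      (fun a : ↥A => ((a : (Module.End L V)ˣ) : Module.End L V))
      (fun i j φ => Module.End.mapsTo_maxGenEigenspace_of_comm (hcomm j i) φ)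
  haveI : Fintype {χ : ↥A → L // JW A χ ≠ ⊥} := hind.fintypeNeBotOfFiniteDimensional
  have hcard : Fintype.card {χ : ↥A → L // JW A χ ≠ ⊥} ≤ Module.finrank L V :=
    hind.subtype_ne_bot_le_finrank
  have hscal : ∀ (χ : ↥A → L) (a : ↥A), ∀ x ∈ JW A χ,
      (((a : (Module.End L V)ˣ) : Module.End L V)) x = χ a • x := by
    intro χ a x hx
    have h1 := mem_JW.mp hx a
    rw [(mem_isFS hchar (hAG a.2)).maxGenEigenspace_eq_eigenspace] at h1
    exact Module.End.mem_eigenspace_iff.mp h1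
  -- powers of u normalize A
  have hpowmem : ∀ k : ℕ, ∀ a ∈ A, (u ^ k)⁻¹ * a * (u ^ k) ∈ A := by
    intro k
    induction k with
    | zero => intro a ha; simpa using ha
    | succ k ih =>
        intro a ha
        have h1 : (u ^ (k+1))⁻¹ * a * (u ^ (k+1))
            = u⁻¹ * ((u ^ k)⁻¹ * a * (u ^ k)) * u := by
          rw [pow_succ, mul_inv_rev]
          simp only [mul_assoc]
        rw [h1]
        exact hn2 _ (ih a ha)
  have hm1 : ∀ a ∈ A, (1 : (Module.End L V)ˣ)⁻¹ * a * 1 ∈ A := by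
    intro a ha; simpa using ha
  have hmInv : ∀ a ∈ A, (u⁻¹)⁻¹ * a * u⁻¹ ∈ A := by
    intro a ha; rw [inv_inv]; exact hn1 a ha
  -- the permutation of nonzero joint eigenspaces
  have hne : ∀ (w : (Module.End L V)ˣ) (hw : ∀ a ∈ A, w⁻¹ * a * w ∈ A) (χ : ↥A → L),
      JW A χ ≠ ⊥ → JW A (chiConj A w hw χ) ≠ ⊥ := by
    intro w hw χ hχ
    obtain ⟨x, hx, hx0⟩ := (Submodule.ne_bot_iff _).mp hχ
    refine (Submodule.ne_bot_iff _).mpr ⟨(↑w : Module.End L V) x, JW_map hw hx, ?_⟩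
    intro h0
    apply hx0
    have : (↑w⁻¹ : Module.End L V) ((↑w : Module.End L V) x) = x := by
      rw [← Module.End.mul_apply, Units.inv_mul, Module.End.one_apply]
    rw [← this, h0, map_zero]
  set σ : Equiv.Perm {χ : ↥A → L // JW A χ ≠ ⊥} :=
    { toFun := fun χs => ⟨chiConj A u hn2 χs.1, hne u hn2 χs.1 χs.2⟩
      invFun := fun χs => ⟨chiConj A u⁻¹ hmInv χs.1, hne u⁻¹ hmInv χs.1 χs.2⟩
      left_inv := by
        intro χs
        refine Subtype.ext ?_
        show chiConj A u⁻¹ hmInv (chiConj A u hn2 χs.1) = χs.1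
        rw [chiConj_comp hmInv hn2 (by rw [inv_mul_cancel]; exact hm1),
          chiConj_congr (inv_mul_cancel u) _ hm1, chiConj_one]
      right_inv := by
        intro χs
        refine Subtype.ext ?_
        show chiConj A u hn2 (chiConj A u⁻¹ hmInv χs.1) = χs.1
        rw [chiConj_comp hn2 hmInv (by rw [mul_inv_cancel]; exact hm1),
          chiConj_congr (mul_inv_cancel u) _ hm1, chiConj_one] } with hσ
  have hσpow : ∀ (k : ℕ) (χs : {χ : ↥A → L // JW A χ ≠ ⊥}),
      ((σ ^ k) χs).1 = chiConj A (u ^ k) (hpowmem k) χs.1 := by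
    intro k
    induction k with
    | zero =>
        intro χs
        rw [pow_zero]
        show χs.1 = _
        rw [chiConj_congr (pow_zero u) _ hm1, chiConj_one]
    | succ k ih =>
        intro χs
        rw [pow_succ, Equiv.Perm.mul_apply]
        have h1 : ((σ ^ k) (σ χs)).1 = chiConj A (u ^ k) (hpowmem k) (σ χs).1 := ih _
        rw [h1]
        have h2 : (σ χs).1 = chiConj A u hn2 χs.1 := rfl
        rw [h2, chiConj_comp (hpowmem k) hn2 (by rw [← pow_succ]; exact hpowmem (k+1)),
          chiConj_congr (pow_succ u k).symm _ (hpowmem (k+1))]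
  have hσn : σ ^ (Nat.card ↥G) = 1 := by
    refine Equiv.ext fun χs => ?_
    show (σ ^ (Nat.card ↥G)) χs = χs
    have h1 := hσpow (Nat.card ↥G) χs
    rw [chiConj_congr (unit_pow_card hu) _ hm1, chiConj_one] at h1
    exact Subtype.ext h1
  have hord1 : orderOf σ ∣ Nat.card ↥G := orderOf_dvd_of_pow_eq_one hσn
  have hord2 : orderOf σ ∣ Nat.factorial D := by
    have h3 : orderOf σ ∣ Fintype.card (Equiv.Perm {χ : ↥A → L // JW A χ ≠ ⊥}) :=
      orderOf_dvd_card
    rw [Fintype.card_perm] at h3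
    exact h3.trans (Nat.factorial_dvd_factorial (hcard.trans hrank))
  have hσ1 : σ = 1 := by
    rw [← orderOf_eq_one_iff]
    exact Nat.dvd_one.mp (hcop ▸ Nat.dvd_gcd hord1 hord2)
  have hfix : ∀ (χ : ↥A → L), JW A χ ≠ ⊥ → chiConj A u hn2 χ = χ := by
    intro χ h
    have h1 : σ ⟨χ, h⟩ = ⟨χ, h⟩ := by rw [hσ1]; rfl
    exact congrArg Subtype.val h1
  -- conclusion
  intro a ha
  have hEq : ((u * a * u⁻¹ : (Module.End L V)ˣ) : Module.End L V)
      = ((a : (Module.End L V)ˣ) : Module.End L V) := by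
    rw [← LinearMap.eqLocus_eq_top, eq_top_iff, ← hdec]
    refine iSup_le ?_
    intro χ x hx
    rw [LinearMap.mem_eqLocus]
    by_cases hχ : JW A χ = ⊥
    · rw [hχ, Submodule.mem_bot] at hx
      rw [hx, map_zero, map_zero]
    · have haA := hscal χ ⟨u * a * u⁻¹, hn1 a ha⟩ x hx
      have ha2 := hscal χ ⟨a, ha⟩ x hx
      have hchi : χ (⟨a, ha⟩ : ↥A) = χ ⟨u * a * u⁻¹, hn1 a ha⟩ := by
        have h5 := congrFun (hfix χ hχ) (⟨u * a * u⁻¹, hn1 a ha⟩ : ↥A)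
        have h6 : (⟨u⁻¹ * (u * a * u⁻¹) * u, hn2 _ (hn1 a ha)⟩ : ↥A) = ⟨a, ha⟩ :=
          Subtype.ext (by
            show u⁻¹ * (u * a * u⁻¹) * u = a
            rw [mul_assoc u a u⁻¹, inv_mul_cancel_left, inv_mul_cancel_right])
        have h7 : chiConj A u hn2 χ (⟨u * a * u⁻¹, hn1 a ha⟩ : ↥A)
            = χ ⟨u⁻¹ * (u * a * u⁻¹) * u, hn2 _ (hn1 a ha)⟩ := rfl
        rw [h7, h6] at h5
        exact h5
      exact haA.trans ((hchi ▸ ha2).symm)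
  have h3 : u * a * u⁻¹ = a := Units.ext hEq
  calc u * a = u * a * u⁻¹ * u := by rw [inv_mul_cancel_right]
    _ = a * u := by rw [h3]

end Key2

section Syl

variable {L : Type*} [Field L] [IsAlgClosed L]
variable {V : Type*} [AddCommGroup V] [Module L V] [FiniteDimensional L V]

theorem syl_comm (G : Subgroup (Module.End L V)ˣ) [Finite ↥G] {D : ℕ}
    (hchar : ¬ ringChar L ∣ Nat.card ↥G)
    (hcop : (Nat.card ↥G).Coprime (Nat.factorial D))
    (hrank : Module.finrank L V ≤ D)
    {p : ℕ} (hp : p.Prime) (P : Sylow p ↥G) :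
    ∀ x y : ↥((P : Subgroup ↥G)), x * y = y * x := by
  haveI : Fact p.Prime := ⟨hp⟩
  by_contra hcon
  push_neg at hcon
  obtain ⟨X, Y, hXY⟩ := hcon
  set Z := Subgroup.center ↥(P : Subgroup ↥G) with hZdef
  have hZtop : Z ≠ ⊤ := by
    intro h
    apply hXY
    have hX : X ∈ Z := by rw [h]; trivial
    exact (Subgroup.mem_center_iff.mp hX Y).symm
  haveI hnt : Nontrivial (↥(P : Subgroup ↥G) ⧸ Z) := by
    obtain ⟨t, ht⟩ : ∃ t : ↥(P : Subgroup ↥G), t ∉ Z := by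
      by_contra h
      push_neg at h
      exact hZtop (Subgroup.eq_top_iff' Z |>.mpr h)
    exact ⟨(t : ↥(P : Subgroup ↥G) ⧸ Z), 1, by rwa [Ne, QuotientGroup.eq_one_iff]⟩
  have hpg : IsPGroup p (↥(P : Subgroup ↥G) ⧸ Z) := P.isPGroup'.to_quotient Z
  haveI hcnt : Nontrivial ↥(Subgroup.center (↥(P : Subgroup ↥G) ⧸ Z)) :=
    hpg.center_nontrivial
  obtain ⟨gq, hgq⟩ := exists_ne (1 : ↥(Subgroup.center (↥(P : Subgroup ↥G) ⧸ Z)))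
  obtain ⟨w, hw⟩ := QuotientGroup.mk'_surjective Z (gq : ↥(P : Subgroup ↥G) ⧸ Z)
  have hwZ : w ∉ Z := by
    intro hmem
    apply hgq
    refine Subtype.ext ?_
    rw [← hw]
    exact (QuotientGroup.eq_one_iff w).mpr hmem
  have hmkw : ∀ t : ↥(P : Subgroup ↥G),
      Commute ((w : ↥(P : Subgroup ↥G) ⧸ Z)) ((t : ↥(P : Subgroup ↥G) ⧸ Z)) := by
    intro t
    have h1 : ((w : ↥(P : Subgroup ↥G) ⧸ Z)) = (gq : ↥(P : Subgroup ↥G) ⧸ Z) := hw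
    rw [h1]
    exact (Subgroup.mem_center_iff.mp gq.2 _).symm
  have hwcomm1 : ∀ t : ↥(P : Subgroup ↥G), w * t * w⁻¹ * t⁻¹ ∈ Z := by
    intro t
    rw [← QuotientGroup.eq_one_iff]
    have h2 := commutatorElement_eq_one_iff_commute.mpr (hmkw t)
    rw [commutatorElement_def] at h2
    simpa using h2
  have hwcomm2 : ∀ t : ↥(P : Subgroup ↥G), t * w * t⁻¹ * w⁻¹ ∈ Z := by
    intro t
    rw [← QuotientGroup.eq_one_iff]
    have h2 := commutatorElement_eq_one_iff_commute.mpr (hmkw t).symm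
    rw [commutatorElement_def] at h2
    simpa using h2
  -- embed into the units group
  set ι : ↥(P : Subgroup ↥G) →* (Module.End L V)ˣ :=
    G.subtype.comp (P : Subgroup ↥G).subtype with hιdef
  have hι_inj : Function.Injective ι :=
    G.subtype_injective.comp (P : Subgroup ↥G).subtype_injective
  have hιG : ∀ t : ↥(P : Subgroup ↥G), ι t ∈ G := fun t => ((t : ↥G)).2
  set genS : Set (Module.End L V)ˣ := (fun z : ↥(P : Subgroup ↥G) => ι z) '' ↑Z ∪ {ι w}
    with hgenS
  set A : Subgroup (Module.End L V)ˣ := Subgroup.closure genS with hA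
  have hwA : ι w ∈ A := Subgroup.subset_closure (Or.inr rfl)
  have hgen_comm : ∀ x ∈ genS, ∀ y ∈ genS, x * y = y * x := by
    rintro x (⟨z1, hz1, rfl⟩ | rfl) y (⟨z2, hz2, rfl⟩ | rfl)
    · rw [← map_mul, ← map_mul, Subgroup.mem_center_iff.mp hz1 z2]
    · rw [← map_mul, ← map_mul, (Subgroup.mem_center_iff.mp hz1 w)]
    · rw [← map_mul, ← map_mul, ← Subgroup.mem_center_iff.mp hz2 w]
    · rfl
  have hA_comm : ∀ a ∈ A, ∀ b ∈ A, a * b = b * a := closure_comm genS hgen_comm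
  have hAG : A ≤ G := by
    rw [hA, Subgroup.closure_le]
    rintro x (⟨z, _, rfl⟩ | rfl)
    · exact hιG z
    · exact hιG w
  have hconj : ∀ x : ↥(P : Subgroup ↥G), ∀ a ∈ A, (ι x) * a * (ι x)⁻¹ ∈ A := by
    intro x
    refine conj_mem_closure genS (ι x) ?_
    rintro s (⟨z, hz, rfl⟩ | rfl)
    · have h1 : (ι x) * (ι z) * (ι x)⁻¹ = ι (x * z * x⁻¹) := by
        rw [map_mul, map_mul, map_inv]
      rw [h1]
      have hzz : x * z * x⁻¹ ∈ Z := by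
        have : Z.Normal := by rw [hZdef]; infer_instance
        exact this.conj_mem z hz x
      exact Subgroup.subset_closure (Or.inl ⟨x * z * x⁻¹, hzz, rfl⟩)
    · have h1 : (ι x) * (ι w) * (ι x)⁻¹ = ι (x * w * x⁻¹) := by
        rw [map_mul, map_mul, map_inv]
      have h2 : x * w * x⁻¹ = (x * w * x⁻¹ * w⁻¹) * w := by
        rw [inv_mul_cancel_right]
      rw [h1, h2, map_mul]
      exact Subgroup.mul_mem _
        (Subgroup.subset_closure (Or.inl ⟨_, hwcomm2 x, rfl⟩))
        (Subgroup.subset_closure (Or.inr rfl))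
  have hkey : ∀ x : ↥(P : Subgroup ↥G), (ι x) * (ι w) = (ι w) * (ι x) := by
    intro x
    refine key_comm G hchar hcop hrank A hAG hA_comm (hιG x) (hconj x) ?_ (ι w) hwA
    intro a ha
    have h1 := hconj x⁻¹ a ha
    rw [map_inv] at h1
    rwa [inv_inv] at h1
  apply hwZ
  rw [hZdef]
  rw [Subgroup.mem_center_iff]
  intro g
  have h1 := hkey g
  rw [← map_mul, ← map_mul] at h1
  exact hι_inj h1

end Syl

section Main

variable {L : Type*} [Field L] [IsAlgClosed L]
variable {V : Type*} [AddCommGroup V] [Module L V] [FiniteDimensional L V]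

theorem aux_comm (G : Subgroup (Module.End L V)ˣ) [Finite ↥G] {D : ℕ}
    (hchar : ¬ ringChar L ∣ Nat.card ↥G)
    (hcop : (Nat.card ↥G).Coprime (Nat.factorial D))
    (hrank : Module.finrank L V ≤ D) :
    ∀ a b : ↥G, a * b = b * a := by
  intro a b
  by_contra hab
  have hc1 : ⁅a, b⁆ ≠ 1 := fun h => hab (commutatorElement_eq_one_iff_commute.mp h)
  have hord : orderOf ⁅a, b⁆ ≠ 1 := fun h => hc1 (orderOf_eq_one_iff.mp h)
  obtain ⟨p, hp, hpd⟩ := Nat.exists_prime_and_dvd hord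
  haveI : Fact p.Prime := ⟨hp⟩
  obtain ⟨P⟩ : Nonempty (Sylow p ↥G) := inferInstance
  have hP : Subgroup.normalizer ((P : Subgroup ↥G) : Set ↥G)
      ≤ Subgroup.centralizer ((P : Subgroup ↥G) : Set ↥G) := by
    intro u hu
    rw [Subgroup.mem_centralizer_iff]
    intro h hh
    -- commute via key_comm applied to the image of P in the units group
    have hA_comm : ∀ x ∈ Subgroup.map G.subtype (P : Subgroup ↥G),
        ∀ y ∈ Subgroup.map G.subtype (P : Subgroup ↥G), x * y = y * x := by
      rintro _ ⟨x, hx, rfl⟩ _ ⟨y, hy, rfl⟩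
      rw [← map_mul, ← map_mul]
      refine congrArg G.subtype ?_
      have h0 := syl_comm G hchar hcop hrank hp P ⟨x, hx⟩ ⟨y, hy⟩
      exact congrArg Subtype.val h0
    have hn1 : ∀ x ∈ Subgroup.map G.subtype (P : Subgroup ↥G),
        (↑u) * x * (↑u)⁻¹ ∈ Subgroup.map G.subtype (P : Subgroup ↥G) := by
      rintro _ ⟨x, hx, rfl⟩
      refine ⟨u * x * u⁻¹, (Subgroup.mem_normalizer_iff.mp hu x).mp hx, ?_⟩
      rw [map_mul, map_mul, map_inv]; rfl
    have hn2 : ∀ x ∈ Subgroup.map G.subtype (P : Subgroup ↥G),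
        (↑u)⁻¹ * x * (↑u) ∈ Subgroup.map G.subtype (P : Subgroup ↥G) := by
      rintro _ ⟨x, hx, rfl⟩
      refine ⟨u⁻¹ * x * u, ?_, ?_⟩
      · have hu' : u⁻¹ ∈ Subgroup.normalizer ((P : Subgroup ↥G) : Set ↥G) := Subgroup.inv_mem _ hu
        have := (Subgroup.mem_normalizer_iff.mp hu' x).mp hx
        rwa [inv_inv] at this
      · rw [map_mul, map_mul, map_inv]; rfl
    have hcent := key_comm G hchar hcop hrank
      (Subgroup.map G.subtype (P : Subgroup ↥G)) (Subgroup.map_subtype_le _)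
      hA_comm u.2 hn1 hn2
    have h1 := hcent (G.subtype h) ⟨h, hh, rfl⟩
    refine Subtype.ext ?_
    exact h1.symm
  haveI : (P : Subgroup ↥G).FiniteIndex := Subgroup.finiteIndex_of_finite
  have hker : ⁅a, b⁆ ∈ (MonoidHom.transferSylow P hP).ker := by
    rw [MonoidHom.mem_ker]
    rw [map_commutatorElement]
    refine commutatorElement_eq_one_iff_commute.mpr ?_
    exact syl_comm G hchar hcop hrank hp P _ _
  have h2 : orderOf ⁅a, b⁆ ∣ Nat.card ↥(MonoidHom.transferSylow P hP).ker := by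
    have h3 : orderOf (⟨⁅a, b⁆, hker⟩ : ↥(MonoidHom.transferSylow P hP).ker)
        ∣ Nat.card ↥(MonoidHom.transferSylow P hP).ker := orderOf_dvd_natCard _
    rwa [← Subgroup.orderOf_coe (⟨⁅a, b⁆, hker⟩ :
      ↥(MonoidHom.transferSylow P hP).ker)] at h3
  exact MonoidHom.not_dvd_card_ker_transferSylow P hP (hpd.trans h2)

end Main

/-- **Kollár's lemma** (paper, Lemma 5.x): a finite subgroup of `GL_d(K)` whose order is
not divisible by the characteristic of `K` and is coprime to `d!` is commutative. -/
theorem finite_subgroup_GL_coprime_factorial_comm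
    (K : Type*) [Field K] (d : ℕ) (hd : 0 < d)
    (G : Subgroup (Matrix.GeneralLinearGroup (Fin d) K)) [Fintype G]
    (hchar : ¬ ringChar K ∣ Fintype.card G)
    (hcop : Nat.Coprime (Fintype.card G) (Nat.factorial d)) :
    ∀ a b : G, a * b = b * a := by
  classical
  intro a b
  set L := AlgebraicClosure K
  let e : Matrix (Fin d) (Fin d) L ≃ₐ[L] Module.End L (Fin d → L) := Matrix.toLinAlgEquiv'
  let θ : Matrix (Fin d) (Fin d) K →+* Module.End L (Fin d → L) :=
    RingHom.comp e.toRingEquiv.toRingHom ((algebraMap K L).mapMatrix)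
  have hθ : Function.Injective ⇑θ := by
    have h0 : ⇑θ = ⇑e ∘ (fun M : Matrix (Fin d) (Fin d) K => M.map (algebraMap K L)) := rfl
    rw [h0]
    refine e.injective.comp ?_
    exact Matrix.map_injective (algebraMap K L).injective
  let ψ : (Matrix (Fin d) (Fin d) K)ˣ →* (Module.End L (Fin d → L))ˣ :=
    Units.map θ.toMonoidHom
  have hψ : Function.Injective ⇑ψ := Units.map_injective hθ
  let G' : Subgroup (Module.End L (Fin d → L))ˣ := Subgroup.map ψ G
  haveI : Finite ↥G' := Finite.of_equiv ↥G (Subgroup.equivMapOfInjective G ψ hψ).toEquiv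
  have hcard' : Nat.card ↥G' = Fintype.card ↥G := by
    rw [← Nat.card_eq_fintype_card]
    exact (Nat.card_congr (Subgroup.equivMapOfInjective G ψ hψ).toEquiv).symm
  have hcharL : ringChar L = ringChar K := by
    haveI : CharP K (ringChar K) := ringChar.charP K
    haveI : CharP L (ringChar K) :=
      charP_of_injective_algebraMap (algebraMap K L).injective _
    exact ringChar.eq L (ringChar K)
  have h1 : ¬ ringChar L ∣ Nat.card ↥G' := by rw [hcharL, hcard']; exact hchar
  have h2 : (Nat.card ↥G').Coprime (Nat.factorial d) := by rw [hcard']; exact hcop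
  have h3 : Module.finrank L (Fin d → L) ≤ d := le_of_eq (Module.finrank_fin_fun L)
  have hcomm := aux_comm G' h1 h2 h3
  have ha' : ψ ↑a ∈ G' := ⟨↑a, a.2, rfl⟩
  have hb' : ψ ↑b ∈ G' := ⟨↑b, b.2, rfl⟩
  have h4 := hcomm ⟨ψ ↑a, ha'⟩ ⟨ψ ↑b, hb'⟩
  have h5 : ψ (↑a * ↑b) = ψ (↑b * ↑a) := by
    rw [map_mul, map_mul]
    exact congrArg Subtype.val h4
  exact Subtype.ext (hψ h5)
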